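/- Let r > 0 and let x ∈ K₁ with ‖x‖₁ > r. Then P_{rB}(x) is a singleton if and only if x is an axis point of l₁; in that case, if x = s(m, ‖x‖₁) for some positive integer m, then P_{rB}(x) = {s(m, r)}. Moreover, if x is not an axis point, then P_{rB}(x) contains infinitely many elements. -/

import Mathlib

open scoped ENNReal

/-- The real Banach space `ℓ¹` of absolutely summable real sequences. -/
noncomputable abbrev ell1 : Type := lp (fun _ : ℕ => ℝ) 1

/-- The real Banach space `ℓ∞` of bounded real sequences (the dual of `ℓ¹`). -/
noncomputable abbrev ellInfty : Type := lp (fun _ : ℕ => ℝ) ∞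

/-- The canonical pairing `⟨φ, x⟩ = ∑ₙ φₙ xₙ` between `ℓ∞` and `ℓ¹`. -/
noncomputable def pairing (φ : ellInfty) (x : ell1) : ℝ := ∑' n, φ n * x n

/-- The constant sequence `β_a = (a, a, a, …) ∈ ℓ∞`. -/
noncomputable def betaSeq (a : ℝ) : ellInfty :=
  ⟨fun _ => a, memℓp_infty (bddAbove_singleton.mono Set.range_const_subset)⟩

/-- The set of best approximations of `x` from the closed ball of radius `r`
centered at the origin of `ℓ¹`: `P_{rB}(x) = {u ∈ rB : ‖x − u‖₁ ≤ ‖x − z‖₁ for all z ∈ rB}`. -/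
def projBall (r : ℝ) (x : ell1) : Set ell1 :=
  {u : ell1 | ‖u‖ ≤ r ∧ ∀ z : ell1, ‖z‖ ≤ r → ‖x - u‖ ≤ ‖x - z‖}

/-- `ψ` belongs to the Mordukhovich (Fréchet) coderivative `D̂*P(x, y)(φ)` of the set-valued map
`P : ℓ¹ ⇉ ℓ¹` at `(x, y)` evaluated at `φ`:
`limsup_{(u,v)→(x,y), v ∈ P(u)} (⟨ψ, u − x⟩ − ⟨φ, v − y⟩)/(‖u − x‖ + ‖v − y‖) ≤ 0`. -/
def inCoderiv (P : ell1 → Set ell1) (x y : ell1) (ψ φ : ellInfty) : Prop :=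
  ∀ ε > (0 : ℝ), ∃ δ > (0 : ℝ), ∀ u v : ell1, v ∈ P u → ‖u - x‖ < δ → ‖v - y‖ < δ →
    pairing ψ (u - x) - pairing φ (v - y) ≤ ε * (‖u - x‖ + ‖v - y‖)

lemma ell1_norm_eq (f : ell1) : ‖f‖ = ∑' n, |f n| := by
  have := lp.norm_eq_tsum_rpow (p := 1) (by norm_num) f
  simpa [Real.norm_eq_abs] using this

lemma ell1_summable_abs (f : ell1) : Summable (fun n => |f n|) := by
  have := (lp.memℓp f).summable (p := 1) (by norm_num)
  simpa [Real.norm_eq_abs] using this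

lemma ell1_summable (f : ell1) : Summable (fun n => f n) :=
  summable_abs_iff.mp (ell1_summable_abs f)

lemma abs_eq_aux {a b : ℝ} (ha : 0 ≤ a) (h : |a - b| = a - |b|) : 0 ≤ b ∧ b ≤ a := by
  have hb : |b| ≤ a := by nlinarith [abs_nonneg (a - b)]
  rcases le_or_gt 0 b with hb0 | hb0
  · exact ⟨hb0, (abs_of_nonneg hb0 ▸ hb)⟩
  · exfalso
    rw [abs_of_neg hb0, abs_of_pos (by linarith)] at h
    linarith

lemma mem_projBall_iff (r : ℝ) (hr : 0 < r) (x : ell1) (hx_nonneg : ∀ n, 0 ≤ x n)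
    (hx : r < ‖x‖) (u : ell1) :
    u ∈ projBall r x ↔ (∀ n, 0 ≤ u n ∧ u n ≤ x n) ∧ ∑' n, u n = r := by
  have hxpos : (0:ℝ) < ‖x‖ := lt_trans hr hx
  have hxsum : ∑' n, x n = ‖x‖ := by
    rw [ell1_norm_eq]
    exact tsum_congr fun n => (abs_of_nonneg (hx_nonneg n)).symm
  set z₀ : ell1 := (r / ‖x‖) • x with hz₀
  have hz₀n : ‖z₀‖ = r := by
    rw [hz₀, norm_smul, Real.norm_eq_abs, abs_of_pos (div_pos hr hxpos),
      div_mul_cancel₀ _ hxpos.ne']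
  have hxz₀ : ‖x - z₀‖ = ‖x‖ - r := by
    have : x - z₀ = (1 - r / ‖x‖) • x := by
      rw [hz₀, sub_smul, one_smul]
    rw [this, norm_smul, Real.norm_eq_abs,
      abs_of_nonneg (by rw [sub_nonneg]; exact (div_le_one hxpos).mpr hx.le),
      sub_mul, one_mul, div_mul_cancel₀ _ hxpos.ne']
  constructor
  · rintro ⟨h1, h2⟩
    have h3 : ‖x - u‖ ≤ ‖x‖ - r := hxz₀ ▸ h2 z₀ hz₀n.le
    have h4 : ‖u‖ = r := by
      have := norm_sub_norm_le x u  -- wrong direction? ‖x‖ - ‖u‖ ≤ ‖x - u‖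
      have h5 : ‖x‖ - ‖u‖ ≤ ‖x - u‖ := norm_sub_norm_le x u
      linarith
    -- termwise equality
    have hle : ∀ n, |x n| - |u n| ≤ |x n - u n| := fun n => abs_sub_abs_le_abs_sub _ _
    have hsum_le : ∑' n, |x n - u n| ≤ ∑' n, (|x n| - |u n|) := by
      have : ∑' n, (|x n| - |u n|) = ‖x‖ - ‖u‖ := by
        rw [Summable.tsum_sub (ell1_summable_abs x) (ell1_summable_abs u), ← ell1_norm_eq, ← ell1_norm_eq]
      rw [this, h4]
      calc ∑' n, |x n - u n| = ‖x - u‖ := by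
            rw [ell1_norm_eq]
            exact tsum_congr fun n => by simp
        _ ≤ ‖x‖ - r := h3
    have heq : ∀ n, |x n - u n| = |x n| - |u n| := by
      by_contra hcon
      push_neg at hcon
      obtain ⟨n₀, hn₀⟩ := hcon
      have hlt : |x n₀| - |u n₀| < |x n₀ - u n₀| := lt_of_le_of_ne (hle n₀) (Ne.symm hn₀)
      have hsummand : Summable (fun n => |x n - u n|) := by
        have := ell1_summable_abs (x - u)
        simpa using this
      have : ∑' n, (|x n| - |u n|) < ∑' n, |x n - u n| :=
        Summable.tsum_lt_tsum hle hlt ((ell1_summable_abs x).sub (ell1_summable_abs u)) hsummand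
      linarith
    refine ⟨fun n => ?_, ?_⟩
    · have := heq n
      rw [abs_of_nonneg (hx_nonneg n)] at this
      exact abs_eq_aux (hx_nonneg n) this
    · have hnn : ∀ n, 0 ≤ u n := fun n => by
        have := heq n
        rw [abs_of_nonneg (hx_nonneg n)] at this
        exact (abs_eq_aux (hx_nonneg n) this).1
      calc ∑' n, u n = ∑' n, |u n| := tsum_congr fun n => (abs_of_nonneg (hnn n)).symm
        _ = ‖u‖ := (ell1_norm_eq u).symm
        _ = r := h4
  · rintro ⟨hbd, hsum⟩
    have hun : ‖u‖ = r := by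
      rw [ell1_norm_eq, ← hsum]
      exact tsum_congr fun n => abs_of_nonneg (hbd n).1
    have hxu : ‖x - u‖ = ‖x‖ - r := by
      rw [ell1_norm_eq]
      calc ∑' n, |(x - u) n| = ∑' n, (x n - u n) := by
            refine tsum_congr fun n => ?_
            have : (x - u) n = x n - u n := by simp
            rw [this, abs_of_nonneg (by linarith [(hbd n).1, (hbd n).2])]
        _ = ‖x‖ - r := by
            rw [Summable.tsum_sub (ell1_summable x) (ell1_summable u), hxsum, hsum]
    refine ⟨hun.le, fun z hz => ?_⟩
    rw [hxu]
    calc ‖x‖ - r ≤ ‖x‖ - ‖z‖ := by linarith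
      _ ≤ ‖x - z‖ := norm_sub_norm_le x z


lemma ell1_tsum_eq_norm (x : ell1) (hx_nonneg : ∀ n, 0 ≤ x n) : ∑' n, x n = ‖x‖ := by
  rw [ell1_norm_eq]
  exact tsum_congr fun n => (abs_of_nonneg (hx_nonneg n)).symm

lemma single_coe (m : ℕ) (b : ℝ) (n : ℕ) :
    (lp.single 1 m b : ell1) n = if n = m then b else 0 := by
  by_cases h : n = m
  · subst h; rw [if_pos rfl]; exact lp.single_apply_self (E := fun _ : ℕ => ℝ) 1 n b
  · rw [if_neg h]; exact lp.single_apply_ne (E := fun _ : ℕ => ℝ) 1 m b h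

lemma norm_single_eq (m : ℕ) (b : ℝ) : ‖(lp.single 1 m b : ell1)‖ = |b| := by
  have := lp.norm_single (E := fun _ : ℕ => ℝ) (p := 1) (by norm_num) m b
  simpa [Real.norm_eq_abs] using this

lemma proj_single (r : ℝ) (hr : 0 < r) (x : ell1) (hx_nonneg : ∀ n, 0 ≤ x n)
    (hx : r < ‖x‖) (m : ℕ) (hm : x = lp.single 1 m ‖x‖) :
    projBall r x = {lp.single 1 m r} := by
  ext u
  rw [Set.mem_singleton_iff, mem_projBall_iff r hr x hx_nonneg hx]
  have hxc : ∀ n, x n = if n = m then ‖x‖ else 0 := fun n => by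
    have h := single_coe m ‖x‖ n
    rw [← hm] at h
    exact h
  constructor
  · rintro ⟨hbd, hsum⟩
    have hzero : ∀ n, n ≠ m → u n = 0 := by
      intro n hn
      have h1 := (hbd n).1
      have h2 := (hbd n).2
      rw [hxc n, if_neg hn] at h2
      linarith
    have hum : u m = r := by
      rw [← hsum, tsum_eq_single m hzero]
    apply lp.ext
    funext n
    rw [single_coe]
    by_cases h : n = m
    · subst h; rw [if_pos rfl]; exact hum
    · rw [if_neg h]; exact hzero n h
  · rintro rfl
    constructor
    · intro n
      rw [single_coe, hxc n]
      by_cases h : n = m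
      · rw [if_pos h, if_pos h]; exact ⟨hr.le, hx.le⟩
      · rw [if_neg h, if_neg h]; exact ⟨le_refl 0, le_refl 0⟩
    · rw [tsum_eq_single m (fun n hn => by rw [single_coe, if_neg hn])]
      rw [single_coe, if_pos rfl]

lemma proj_infinite (r : ℝ) (hr : 0 < r) (x : ell1) (hx_nonneg : ∀ n, 0 ≤ x n)
    (hx : r < ‖x‖)
    (hna : ¬ ∃ (m : ℕ) (b : ℝ), b ≠ 0 ∧ x = lp.single 1 m b) :
    (projBall r x).Infinite := by
  have hxpos : (0:ℝ) < ‖x‖ := lt_trans hr hx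
  have hxsum : ∑' n, x n = ‖x‖ := ell1_tsum_eq_norm x hx_nonneg
  obtain ⟨i, hi⟩ : ∃ i, x i ≠ 0 := by
    by_contra h
    push_neg at h
    have : x = 0 := lp.ext (funext fun n => h n)
    rw [this, norm_zero] at hx
    linarith
  have hipos : 0 < x i := (hx_nonneg i).lt_of_ne (Ne.symm hi)
  obtain ⟨j, hji, hjpos⟩ : ∃ j, j ≠ i ∧ 0 < x j := by
    by_contra h
    push_neg at h
    refine hna ⟨i, x i, hi, lp.ext (funext fun n => ?_)⟩
    rw [single_coe]
    by_cases hn : n = i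
    · subst hn; rw [if_pos rfl]
    · rw [if_neg hn]
      have := h n hn
      have := hx_nonneg n
      linarith
  set c : ℝ := r / ‖x‖ with hc
  have hc0 : 0 < c := div_pos hr hxpos
  have hc1 : c < 1 := (div_lt_one hxpos).mpr hx
  set ε : ℝ := min ((1 - c) * x i) (c * x j) with hε
  have hεpos : 0 < ε := lt_min (by nlinarith) (by nlinarith)
  set φ : ℝ → ell1 := fun t => c • x + lp.single 1 i t - lp.single 1 j t with hφdef
  have hφ : ∀ t n, (φ t) n = c * x n + (if n = i then t else 0) - (if n = j then t else 0) := by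
    intro t n
    have : (φ t) n = (c • x) n + (lp.single 1 i t : ell1) n - (lp.single 1 j t : ell1) n := by
      simp [hφdef]; rfl
    rw [this, single_coe, single_coe]
    congr 1
  have hmem : ∀ t ∈ Set.Ioo (0:ℝ) ε, φ t ∈ projBall r x := by
    rintro t ⟨ht0, htε⟩
    have hti : t ≤ (1 - c) * x i := le_of_lt (lt_of_lt_of_le htε (min_le_left _ _))
    have htj : t ≤ c * x j := le_of_lt (lt_of_lt_of_le htε (min_le_right _ _))
    rw [mem_projBall_iff r hr x hx_nonneg hx]
    constructor
    · intro n
      rw [hφ]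
      by_cases hni : n = i
      · subst hni
        rw [if_pos rfl, if_neg (Ne.symm hji)]
        constructor
        · nlinarith [hx_nonneg n]
        · nlinarith
      · rw [if_neg hni]
        by_cases hnj : n = j
        · subst hnj
          rw [if_pos rfl]
          constructor
          · nlinarith
          · nlinarith [hx_nonneg n]
        · rw [if_neg hnj]
          constructor
          · nlinarith [hx_nonneg n]
          · nlinarith [hx_nonneg n]
    · have s1 : Summable (fun n => c * x n) := (ell1_summable x).mul_left c
      have s2 : Summable (fun n => if n = i then t else 0) := (hasSum_ite_eq i t).summable
      have s3 : Summable (fun n => if n = j then t else 0) := (hasSum_ite_eq j t).summable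
      calc ∑' n, (φ t) n
          = ∑' n, (c * x n + ((if n = i then t else 0) - (if n = j then t else 0))) := by
            refine tsum_congr fun n => ?_
            rw [hφ]; ring
        _ = (∑' n, c * x n) + ∑' n, ((if n = i then t else 0) - (if n = j then t else 0)) :=
            Summable.tsum_add s1 (s2.sub s3)
        _ = c * ‖x‖ + (t - t) := by
            rw [Summable.tsum_sub s2 s3, tsum_ite_eq, tsum_ite_eq, tsum_mul_left, hxsum]
        _ = r := by
            rw [hc, div_mul_cancel₀ _ hxpos.ne']; ring
  have hinj : Set.InjOn φ (Set.Ioo 0 ε) := by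
    intro s hs t ht hst
    have h1 := hφ s i
    have h2 := hφ t i
    rw [hst] at h1
    rw [h1, if_pos rfl, if_pos rfl, if_neg (Ne.symm hji), if_neg (Ne.symm hji)] at h2
    linarith
  have himg : (φ '' Set.Ioo 0 ε).Infinite := (Set.Ioo_infinite hεpos).image hinj
  exact himg.mono (by rintro y ⟨t, ht, rfl⟩; exact hmem t ht)


/-- Proposition 3.3 (c). Let `r > 0` and `x ∈ K₁` with `‖x‖₁ > r`.
Then `P_{rB}(x)` is a singleton iff `x` is an axis point of `ℓ¹`; in that case, if
`x = s(m, ‖x‖₁)` then `P_{rB}(x) = {s(m, r)}`; and if `x` is not an axis point then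
`P_{rB}(x)` contains infinitely many elements. -/
theorem stmt_5 (r : ℝ) (hr : 0 < r) (x : ell1) (hx_nonneg : ∀ n, 0 ≤ x n)
    (hx : r < ‖x‖) :
    ((∃! u : ell1, u ∈ projBall r x) ↔
        ∃ (m : ℕ) (b : ℝ), b ≠ 0 ∧ x = lp.single 1 m b) ∧
    (∀ m : ℕ, x = lp.single 1 m ‖x‖ → projBall r x = {lp.single 1 m r}) ∧
    ((¬ ∃ (m : ℕ) (b : ℝ), b ≠ 0 ∧ x = lp.single 1 m b) →
      (projBall r x).Infinite) := by
  have hxsum := ell1_tsum_eq_norm x hx_nonneg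
  refine ⟨⟨?_, ?_⟩, fun m hm => proj_single r hr x hx_nonneg hx m hm, fun hna =>
    proj_infinite r hr x hx_nonneg hx hna⟩
  · intro hu
    by_contra hna
    have hinf := proj_infinite r hr x hx_nonneg hx hna
    obtain ⟨u, hu, huniq⟩ := hu
    have hsub : projBall r x ⊆ {u} := fun v hv => huniq v hv
    exact hinf ((Set.finite_singleton u).subset hsub)
  · rintro ⟨m, b, hb, hxe⟩
    have hbm : x m = b := by rw [hxe, single_coe, if_pos rfl]
    have hbpos : 0 < b := (hbm ▸ hx_nonneg m).lt_of_ne (Ne.symm hb)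
    have hnb : ‖x‖ = b := by rw [hxe, norm_single_eq, abs_of_pos hbpos]
    have hps := proj_single r hr x hx_nonneg hx m (by rw [hnb]; exact hxe)
    exact ⟨lp.single 1 m r, by rw [hps]; rfl, fun y hy => by rwa [hps] at hy⟩
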